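/- For density matrices ρ, σ, the trace distance T(ρ,σ) and fidelity F(ρ,σ) satisfy 1 − √F(ρ,σ) ≤ T(ρ,σ) ≤ √(1 − F(ρ,σ)). -/

import Mathlib

namespace Matrix.PosSemidef

open scoped ComplexOrder

/-- The positive semidefinite square root of a positive semidefinite matrix
(the definition of Mathlib of December 2024, since removed). -/
noncomputable def sqrt {n : Type*} [Fintype n] [DecidableEq n] {𝕜 : Type*} [RCLike 𝕜]
    {A : Matrix n n 𝕜} (hA : A.PosSemidef) : Matrix n n 𝕜 :=
  hA.1.eigenvectorUnitary.1 * Matrix.diagonal ((↑) ∘ (√·) ∘ hA.1.eigenvalues) *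
  (star hA.1.eigenvectorUnitary : Matrix n n 𝕜)

end Matrix.PosSemidef


namespace FvdG

open Matrix ComplexOrder Finset

variable {d : ℕ}

/-- squared norm of a complex vector -/
noncomputable def nsq (x : Fin d → ℂ) : ℝ := ∑ i, ‖x i‖ ^ 2

lemma nsq_nonneg (x : Fin d → ℂ) : 0 ≤ nsq x :=
  Finset.sum_nonneg fun _ _ => sq_nonneg _

lemma re_star_dot_self (x : Fin d → ℂ) : (star x ⬝ᵥ x).re = nsq x := by
  simp only [dotProduct, Pi.star_apply, Complex.re_sum, nsq]
  refine Finset.sum_congr rfl fun i _ => ?_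
  rw [RCLike.star_def, ← Complex.normSq_eq_conj_mul_self, Complex.ofReal_re,
    ← Complex.sq_norm]

lemma sum_cs (f g : Fin d → ℝ) (hf : ∀ i, 0 ≤ f i) (hg : ∀ i, 0 ≤ g i) :
    ∑ i, f i * g i ≤ Real.sqrt (∑ i, f i ^ 2) * Real.sqrt (∑ i, g i ^ 2) := by
  rw [← Real.sqrt_mul (Finset.sum_nonneg fun _ _ => sq_nonneg _)]
  rw [show (∑ i, f i * g i) = Real.sqrt ((∑ i, f i * g i)^2) from
    (Real.sqrt_sq (Finset.sum_nonneg fun i _ => mul_nonneg (hf i) (hg i))).symm]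
  exact Real.sqrt_le_sqrt (Finset.sum_mul_sq_le_sq_mul_sq _ _ _)

lemma cs_dot (x y : Fin d → ℂ) :
    ‖star x ⬝ᵥ y‖ ≤ Real.sqrt (nsq x) * Real.sqrt (nsq y) := by
  calc ‖star x ⬝ᵥ y‖ ≤ ∑ i, ‖x i‖ * ‖y i‖ := by
        refine (norm_sum_le _ _).trans_eq ?_
        refine Finset.sum_congr rfl fun i _ => ?_
        simp [Pi.star_apply, RCLike.star_def, norm_mul]
    _ ≤ Real.sqrt (nsq x) * Real.sqrt (nsq y) :=
        sum_cs _ _ (fun i => norm_nonneg _) (fun i => norm_nonneg _)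

lemma contraction_nsq {C : Matrix (Fin d) (Fin d) ℂ}
    (hC : (1 - Cᴴ * C).PosSemidef) (x : Fin d → ℂ) :
    nsq (C *ᵥ x) ≤ nsq x := by
  have h := hC.dotProduct_mulVec_nonneg x
  rw [Complex.le_def] at h
  obtain ⟨hre, -⟩ := h
  simp only [Complex.zero_re] at hre
  rw [sub_mulVec, one_mulVec, dotProduct_sub] at hre
  rw [← Matrix.mulVec_mulVec, Matrix.dotProduct_mulVec (star x) Cᴴ,
    ← Matrix.star_mulVec] at hre
  rw [Complex.sub_re, re_star_dot_self, re_star_dot_self] at hre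
  linarith

variable {d : ℕ}

lemma diag_congr {f g : Fin d → ℂ} (h : ∀ i, f i = g i) :
    diagonal f = diagonal g := by rw [funext h]

variable {E : Matrix (Fin d) (Fin d) ℂ} (hE : E.IsHermitian)

/-- functional calculus via the spectral theorem -/
noncomputable def mfun (f : ℝ → ℝ) : Matrix (Fin d) (Fin d) ℂ :=
  (hE.eigenvectorUnitary : Matrix (Fin d) (Fin d) ℂ) *
    diagonal (RCLike.ofReal ∘ f ∘ hE.eigenvalues) *
    (star hE.eigenvectorUnitary : Matrix (Fin d) (Fin d) ℂ)

lemma mfun_mul (f g : ℝ → ℝ) :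
    mfun hE f * mfun hE g = mfun hE (fun x => f x * g x) := by
  unfold mfun
  rw [mul_assoc, mul_assoc, ← mul_assoc (star hE.eigenvectorUnitary : Matrix (Fin d) (Fin d) ℂ),
    ← mul_assoc (star hE.eigenvectorUnitary : Matrix (Fin d) (Fin d) ℂ),
    Unitary.coe_star_mul_self, one_mul, ← mul_assoc, ← mul_assoc, mul_assoc _ _ (diagonal _),
    diagonal_mul_diagonal]
  rw [diag_congr (g := RCLike.ofReal ∘ (fun x => f x * g x) ∘ hE.eigenvalues) (by intro i; simp)]

lemma mfun_id : mfun hE (fun x => x) = E := hE.spectral_theorem.symm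

lemma mfun_one : mfun hE (fun _ => 1) = 1 := by
  unfold mfun
  have : diagonal (RCLike.ofReal ∘ (fun _ : ℝ => (1:ℝ)) ∘ hE.eigenvalues) =
      (1 : Matrix (Fin d) (Fin d) ℂ) := by
    rw [← diagonal_one]; exact diag_congr (by intro i; simp)
  rw [this, mul_one]
  exact Unitary.coe_mul_star_self _

lemma mfun_sub (f g : ℝ → ℝ) :
    mfun hE f - mfun hE g = mfun hE (fun x => f x - g x) := by
  unfold mfun
  rw [← sub_mul, ← mul_sub, diagonal_sub]
  rw [diag_congr (g := RCLike.ofReal ∘ (fun x => f x - g x) ∘ hE.eigenvalues) (by intro i; simp)]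

lemma mfun_isHermitian (f : ℝ → ℝ) : (mfun hE f).IsHermitian := by
  unfold mfun
  unfold IsHermitian
  rw [conjTranspose_mul, conjTranspose_mul, diagonal_conjTranspose, mul_assoc]
  rw [diag_congr (f := star (RCLike.ofReal ∘ f ∘ hE.eigenvalues))
    (g := RCLike.ofReal ∘ f ∘ hE.eigenvalues)
    (by intro i; simp [Pi.star_apply, RCLike.star_def])]
  rw [show ((star hE.eigenvectorUnitary : Matrix (Fin d) (Fin d) ℂ))ᴴ =
    (hE.eigenvectorUnitary : Matrix (Fin d) (Fin d) ℂ) by simp [star_eq_conjTranspose]]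
  rw [show ((hE.eigenvectorUnitary : Matrix (Fin d) (Fin d) ℂ))ᴴ =
    (star hE.eigenvectorUnitary : Matrix (Fin d) (Fin d) ℂ) by simp [star_eq_conjTranspose]]

lemma mfun_posSemidef {f : ℝ → ℝ} (hf : ∀ x, 0 ≤ f x) : (mfun hE f).PosSemidef := by
  unfold mfun
  rw [show (star hE.eigenvectorUnitary : Matrix (Fin d) (Fin d) ℂ) =
    ((hE.eigenvectorUnitary : Matrix (Fin d) (Fin d) ℂ))ᴴ from rfl]
  apply PosSemidef.mul_mul_conjTranspose_same
  refine posSemidef_diagonal_iff.mpr fun i => ?_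
  rw [Function.comp_apply, RCLike.nonneg_iff]
  constructor
  · simpa using hf _
  · simp

lemma mfun_trace (f : ℝ → ℝ) : (mfun hE f).trace = ∑ i, (f (hE.eigenvalues i) : ℂ) := by
  unfold mfun
  rw [Matrix.trace_mul_cycle, Unitary.coe_star_mul_self, one_mul, trace_diagonal]
  simp

variable {d : ℕ}

lemma entry_eq_dot (C U : Matrix (Fin d) (Fin d) ℂ) (i : Fin d) :
    (Uᴴ * C * U) i i = star (fun j => U j i) ⬝ᵥ (C *ᵥ fun j => U j i) := by
  simp only [mul_apply, mulVec, dotProduct, conjTranspose_apply, Pi.star_apply,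
    Finset.sum_mul, Finset.mul_sum]
  rw [Finset.sum_comm]
  refine Finset.sum_congr rfl fun j _ => Finset.sum_congr rfl fun k _ => ?_
  ring

lemma trace_mul_herm_eq {C M : Matrix (Fin d) (Fin d) ℂ} (hM : M.IsHermitian) :
    (C * M).trace = ∑ i, ((hM.eigenvectorUnitary : Matrix (Fin d) (Fin d) ℂ)ᴴ * C *
      (hM.eigenvectorUnitary : Matrix (Fin d) (Fin d) ℂ)) i i * (hM.eigenvalues i : ℂ) := by
  set U := (hM.eigenvectorUnitary : Matrix (Fin d) (Fin d) ℂ) with hU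
  have hSU : (star hM.eigenvectorUnitary : Matrix (Fin d) (Fin d) ℂ) = Uᴴ := rfl
  conv_lhs => rw [hM.spectral_theorem, Unitary.conjStarAlgAut_apply, hSU]
  rw [← mul_assoc, Matrix.trace_mul_comm, ← mul_assoc, ← mul_assoc]
  rw [Matrix.trace]
  refine Finset.sum_congr rfl fun i _ => ?_
  rw [Matrix.diag_apply, Matrix.mul_diagonal]
  simp
  exact Or.inl rfl

lemma unitary_col_nsq {M : Matrix (Fin d) (Fin d) ℂ} (hM : M.IsHermitian) (i : Fin d) :
    nsq (fun j => (hM.eigenvectorUnitary : Matrix (Fin d) (Fin d) ℂ) j i) = 1 := by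
  set U := (hM.eigenvectorUnitary : Matrix (Fin d) (Fin d) ℂ) with hU
  have hUU : Uᴴ * U = 1 := by
    have := Unitary.coe_star_mul_self hM.eigenvectorUnitary
    exact this
  have h1 : (Uᴴ * U) i i = 1 := by rw [hUU]; simp
  rw [← re_star_dot_self]
  rw [show star (fun j => U j i) ⬝ᵥ (fun j => U j i) = (Uᴴ * U) i i by
    simp [mul_apply, dotProduct, conjTranspose_apply, mul_comm]]
  rw [h1]
  simp

/-- Key lemma: for a contraction `C` and Hermitian `M`,
`re Tr(C M) ≤ ∑ |eigenvalues of M|`. -/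
lemma re_trace_mul_le {C M : Matrix (Fin d) (Fin d) ℂ} (hM : M.IsHermitian)
    (hC : (1 - Cᴴ * C).PosSemidef) :
    (C * M).trace.re ≤ ∑ i, |hM.eigenvalues i| := by
  set U := (hM.eigenvectorUnitary : Matrix (Fin d) (Fin d) ℂ) with hU
  have hentry : ∀ i, ‖(Uᴴ * C * U) i i‖ ≤ 1 := by
    intro i
    rw [entry_eq_dot]
    refine (cs_dot _ _).trans ?_
    have h1 : nsq (fun j => U j i) = 1 := unitary_col_nsq hM i
    have h2 : nsq (C *ᵥ fun j => U j i) ≤ 1 := by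
      rw [← h1]; exact contraction_nsq hC _
    rw [h1]
    calc Real.sqrt 1 * Real.sqrt (nsq (C *ᵥ fun j => U j i))
        ≤ 1 * 1 := by
          refine mul_le_mul ?_ ?_ (Real.sqrt_nonneg _) one_pos.le
          · simp
          · rw [show (1:ℝ) = Real.sqrt 1 by simp]
            exact Real.sqrt_le_sqrt h2
      _ = 1 := by ring
  rw [trace_mul_herm_eq hM]
  rw [Complex.re_sum]
  refine Finset.sum_le_sum fun i _ => ?_
  have : ((Uᴴ * C * U) i i * (hM.eigenvalues i : ℂ)).re
      = ((Uᴴ * C * U) i i).re * hM.eigenvalues i := by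
    rw [Complex.mul_re]
    simp
  rw [this]
  calc ((Uᴴ * C * U) i i).re * hM.eigenvalues i
      ≤ |((Uᴴ * C * U) i i).re * hM.eigenvalues i| := le_abs_self _
    _ = |((Uᴴ * C * U) i i).re| * |hM.eigenvalues i| := abs_mul _ _
    _ ≤ 1 * |hM.eigenvalues i| := by
        refine mul_le_mul_of_nonneg_right ?_ (abs_nonneg _)
        exact (Complex.abs_re_le_norm _).trans (hentry i)
    _ = |hM.eigenvalues i| := one_mul _

lemma trace_eq_sum_eigenvalues {M : Matrix (Fin d) (Fin d) ℂ} (hM : M.IsHermitian) :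
    M.trace = ∑ i, (hM.eigenvalues i : ℂ) := by
  have h := congrArg Matrix.trace (mfun_id hM)
  rw [← h, mfun_trace]


noncomputable def pinv (x : ℝ) : ℝ := if x = 0 then 0 else x⁻¹
noncomputable def chi (x : ℝ) : ℝ := if x = 0 then 0 else 1

lemma mfun_congr {E : Matrix (Fin d) (Fin d) ℂ} (hE : E.IsHermitian) {f g : ℝ → ℝ}
    (h : ∀ x, f x = g x) : mfun hE f = mfun hE g := by
  unfold mfun
  rw [diag_congr (f := RCLike.ofReal ∘ f ∘ hE.eigenvalues)
    (g := RCLike.ofReal ∘ g ∘ hE.eigenvalues) (by intro i; simp [h])]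

lemma exists_partial_isometry {N Y : Matrix (Fin d) (Fin d) ℂ}
    (hN : N.IsHermitian) (hYN : Yᴴ * Y = N * N) :
    ∃ V : Matrix (Fin d) (Fin d) ℂ,
      V * N = Y ∧ Vᴴ * Y = N ∧ (1 - Vᴴ * V).PosSemidef ∧ (1 - V * Vᴴ).PosSemidef := by
  have hNid : mfun hN (fun x => x) = N := mfun_id hN
  have prod : ∀ f g h : ℝ → ℝ, (∀ x, f x * g x = h x) →
      mfun hN f * mfun hN g = mfun hN h :=
    fun f g h hx => (mfun_mul hN f g).trans (mfun_congr hN hx)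
  set Np := mfun hN pinv with hNpdef
  set P := mfun hN chi with hPdef
  have hNpH : Npᴴ = Np := (mfun_isHermitian hN pinv).eq
  have hPH : Pᴴ = P := (mfun_isHermitian hN chi).eq
  have h1 : Np * N = P := by
    have := prod pinv (fun x => x) chi
      (fun x => by unfold pinv chi; by_cases h : x = 0 <;> simp [h, inv_mul_cancel₀])
    rwa [hNid] at this
  have h2 : N * Np = P := by
    have := prod (fun x => x) pinv chi
      (fun x => by unfold pinv chi; by_cases h : x = 0 <;> simp [h, mul_inv_cancel₀])
    rwa [hNid] at this
  have h3 : Np * P = Np := prod pinv chi pinv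
      (fun x => by unfold pinv chi; by_cases h : x = 0 <;> simp [h])
  have h4 : N * P = N := by
    have := prod (fun x => x) chi (fun x => x)
      (fun x => by unfold chi; by_cases h : x = 0 <;> simp [h])
    rwa [hNid] at this
  have h5 : P * N = N := by
    have := prod chi (fun x => x) (fun x => x)
      (fun x => by unfold chi; by_cases h : x = 0 <;> simp [h])
    rwa [hNid] at this
  have hNN : N * N = mfun hN (fun x => x * x) := by
    have := prod (fun x => x) (fun x => x) (fun x => x * x) (fun x => rfl)
    rw [hNid] at this
    exact this
  have h6 : Np * (N * N) = N := by
    have := prod pinv (fun x => x * x) (fun x => x)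
      (fun x => by
        unfold pinv
        by_cases h : x = 0
        · simp [h]
        · rw [if_neg h]; field_simp)
    rw [hNid, ← hNN] at this
    exact this
  set V := Y * Np with hVdef
  have hVH : Vᴴ = Np * Yᴴ := by rw [hVdef, conjTranspose_mul, hNpH]
  have hb : Vᴴ * Y = N := by rw [hVH, mul_assoc, hYN, h6]
  have hc : Vᴴ * V = P := by
    rw [hVH, hVdef, mul_assoc, ← mul_assoc Yᴴ, hYN, ← mul_assoc, ← mul_assoc, h1, h5, h2]
  have hYP : Y * P = Y := by
    have hZ : (Y * P - Y)ᴴ * (Y * P - Y) = 0 := by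
      have t1 : Yᴴ * (Y * P) = N * N := by rw [← mul_assoc, hYN, mul_assoc, h4]
      have t2 : P * Yᴴ * (Y * P) = N * N := by rw [mul_assoc P Yᴴ, t1, ← mul_assoc, h5]
      have t3 : P * Yᴴ * Y = N * N := by rw [mul_assoc, hYN, ← mul_assoc, h5]
      rw [conjTranspose_sub, conjTranspose_mul, hPH, sub_mul, mul_sub, mul_sub,
        t2, t3, t1, hYN]
      abel
    exact sub_eq_zero.mp (conjTranspose_mul_self_eq_zero.mp hZ)
  have ha : V * N = Y := by rw [hVdef, mul_assoc, h1, hYP]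
  have hd : (1 - Vᴴ * V).PosSemidef := by
    rw [hc, hPdef, ← mfun_one hN, mfun_sub]
    refine mfun_posSemidef hN fun x => ?_
    unfold chi
    by_cases h : x = 0 <;> simp [h]
  have hVP : V * P = V := by rw [hVdef, mul_assoc, h3]
  have hQQ : (V * Vᴴ) * (V * Vᴴ) = V * Vᴴ := by
    rw [mul_assoc V, ← mul_assoc Vᴴ, hc, ← mul_assoc V, hVP]
  have he : (1 - V * Vᴴ).PosSemidef := by
    have hQH : (1 - V * Vᴴ)ᴴ = 1 - V * Vᴴ := by
      rw [conjTranspose_sub, conjTranspose_one, conjTranspose_mul, conjTranspose_conjTranspose]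
    have hfix : (1 - V * Vᴴ)ᴴ * (1 - V * Vᴴ) = 1 - V * Vᴴ := by
      rw [hQH, mul_sub, sub_mul, sub_mul, one_mul, mul_one, hQQ, one_mul]
      abel
    rw [← hfix]
    exact posSemidef_conjTranspose_mul_self _
  exact ⟨V, ha, hb, hd, he⟩
lemma mfun_add {E : Matrix (Fin d) (Fin d) ℂ} (hE : E.IsHermitian) (f g : ℝ → ℝ) :
    mfun hE f + mfun hE g = mfun hE (fun x => f x + g x) := by
  unfold mfun
  rw [← add_mul, ← mul_add, diagonal_add]
  rw [diag_congr (g := RCLike.ofReal ∘ (fun x => f x + g x) ∘ hE.eigenvalues)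
    (by intro i; simp)]

lemma trace_re_eq_sum_eig {M : Matrix (Fin d) (Fin d) ℂ} (hM : M.IsHermitian) :
    M.trace.re = ∑ i, hM.eigenvalues i := by
  rw [trace_eq_sum_eigenvalues hM, Complex.re_sum]
  simp

lemma psd_sum_abs_eig {N : Matrix (Fin d) (Fin d) ℂ} (hN : N.PosSemidef) :
    ∑ i, |hN.1.eigenvalues i| = N.trace.re := by
  rw [trace_re_eq_sum_eig hN.1]
  exact Finset.sum_congr rfl fun i _ => abs_of_nonneg (hN.eigenvalues_nonneg i)

lemma _root_.Matrix.PosSemidef.posSemidef_sqrt {P : Matrix (Fin d) (Fin d) ℂ}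
    (hP : P.PosSemidef) : hP.sqrt.PosSemidef :=
  mfun_posSemidef hP.1 (f := Real.sqrt) Real.sqrt_nonneg

lemma _root_.Matrix.PosSemidef.sqrt_mul_self {P : Matrix (Fin d) (Fin d) ℂ}
    (hP : P.PosSemidef) : hP.sqrt * hP.sqrt = P := by
  have e : hP.sqrt = mfun hP.1 Real.sqrt := rfl
  rw [e, mfun_mul]
  conv_rhs => rw [← mfun_id hP.1]
  unfold mfun
  rw [diag_congr (f := RCLike.ofReal ∘ (fun x => Real.sqrt x * Real.sqrt x) ∘ hP.1.eigenvalues)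
    (g := RCLike.ofReal ∘ (fun x => x) ∘ hP.1.eigenvalues)
    (by intro i; simp [Real.mul_self_sqrt (hP.eigenvalues_nonneg i)])]

lemma trace_mul_psd_nonneg {P Q : Matrix (Fin d) (Fin d) ℂ}
    (hP : P.PosSemidef) (hQ : Q.PosSemidef) : 0 ≤ (P * Q).trace.re := by
  have hs : hP.sqrt * hP.sqrt = P := hP.sqrt_mul_self
  have hherm : hP.sqrt.IsHermitian := hP.posSemidef_sqrt.1
  have hcycle : (P * Q).trace = (hP.sqrt * Q * hP.sqrt).trace := by
    have : (hP.sqrt * Q * hP.sqrt).trace = (P * Q).trace := by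
      rw [mul_assoc, trace_mul_comm, mul_assoc, hs, trace_mul_comm]
    exact this.symm
  have hpsd : (hP.sqrt * Q * hP.sqrt).PosSemidef := by
    nth_rewrite 2 [← hherm.eq]
    exact hQ.mul_mul_conjTranspose_same hP.sqrt
  rw [hcycle, trace_re_eq_sum_eig hpsd.1]
  exact Finset.sum_nonneg fun i _ => hpsd.eigenvalues_nonneg i

noncomputable def sgn (x : ℝ) : ℝ := if x < 0 then -1 else if 0 < x then 1 else 0

lemma sgn_mul_self (x : ℝ) : sgn x * x = |x| := by
  unfold sgn
  rcases lt_trichotomy x 0 with h | h | h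
  · rw [if_pos h, abs_of_neg h]; ring
  · simp [h]
  · rw [if_neg (by linarith), if_pos h, abs_of_pos h]; ring

lemma self_mul_sgn (x : ℝ) : x * sgn x = |x| := by rw [mul_comm]; exact sgn_mul_self x

lemma sgn_sq_le_one (x : ℝ) : sgn x * sgn x ≤ 1 := by
  unfold sgn
  rcases lt_trichotomy x 0 with h | h | h
  · rw [if_pos h]; norm_num
  · simp [h]
  · rw [if_neg (by linarith), if_pos h]; norm_num

lemma powers_stormer {Rρ Rσ A B : Matrix (Fin d) (Fin d) ℂ}
    (hA : A.PosSemidef) (hB : B.PosSemidef)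
    (hAρ : A * A = Rρ) (hBσ : B * B = Rσ) (hΔ : (Rρ - Rσ).IsHermitian) :
    ((A - B) * (A - B)).trace.re ≤ ∑ i, |hΔ.eigenvalues i| := by
  set H := A - B with hHdef
  have hH : H.IsHermitian := hA.1.sub hB.1
  set Sg := mfun hH sgn with hSgdef
  set absH := mfun hH abs with habsdef
  have hHid : mfun hH (fun x => x) = H := mfun_id hH
  -- step 1 : re Tr(H*H) ≤ re Tr(absH*(A+B))
  have habsm : (absH - H).PosSemidef := by
    have e := mfun_sub hH abs (fun x => x)
    rw [hHid] at e
    rw [habsdef, e]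
    exact mfun_posSemidef hH fun x => by simp [abs_nonneg, le_abs_self, sub_nonneg]
  have habsp : (absH + H).PosSemidef := by
    have e := mfun_add hH abs (fun x => x)
    rw [hHid] at e
    rw [habsdef, e]
    exact mfun_posSemidef hH fun x => by
      have := neg_abs_le x; linarith
  have hstep1 : ((A - B) * (A - B)).trace.re ≤ (absH * (A + B)).trace.re := by
    have e1 : 0 ≤ ((absH - H) * A).trace.re := trace_mul_psd_nonneg habsm hA
    have e2 : 0 ≤ ((absH + H) * B).trace.re := trace_mul_psd_nonneg habsp hB
    have expand1 : ((absH - H) * A).trace = (absH * A).trace - (H * A).trace := by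
      rw [sub_mul, trace_sub]
    have expand2 : ((absH + H) * B).trace = (absH * B).trace + (H * B).trace := by
      rw [add_mul, trace_add]
    have expand3 : ((A - B) * (A - B)).trace = (H * A).trace - (H * B).trace := by
      rw [← hHdef, mul_sub, trace_sub]
    have expand4 : (absH * (A + B)).trace = (absH * A).trace + (absH * B).trace := by
      rw [mul_add, trace_add]
    rw [expand1] at e1
    rw [expand2] at e2
    rw [expand3, expand4]
    simp only [Complex.sub_re, Complex.add_re] at *
    linarith
  -- step 2 : Tr(absH*(A+B)) = Tr(Sg*(Rρ-Rσ))
  have hSgH : Sg * H = absH := by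
    have := (mfun_mul hH sgn (fun x => x)).trans (mfun_congr hH sgn_mul_self)
    rwa [hHid] at this
  have hHSg : H * Sg = absH := by
    have := (mfun_mul hH (fun x => x) sgn).trans (mfun_congr hH self_mul_sgn)
    rwa [hHid] at this
  have hkey : H * (A + B) + (A + B) * H = (Rρ - Rσ) + (Rρ - Rσ) := by
    rw [hHdef, ← hAρ, ← hBσ]
    noncomm_ring
  have hstep2 : (absH * (A + B)).trace + (absH * (A + B)).trace
      = (Sg * (Rρ - Rσ)).trace + (Sg * (Rρ - Rσ)).trace := by
    have e1 : (Sg * (H * (A + B))).trace = (absH * (A + B)).trace := by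
      rw [← mul_assoc, hSgH]
    have e2 : (Sg * ((A + B) * H)).trace = (absH * (A + B)).trace := by
      rw [trace_mul_comm, mul_assoc, hHSg, trace_mul_comm]
    calc (absH * (A + B)).trace + (absH * (A + B)).trace
        = (Sg * (H * (A + B))).trace + (Sg * ((A + B) * H)).trace := by rw [e1, e2]
      _ = (Sg * (Rρ - Rσ)).trace + (Sg * (Rρ - Rσ)).trace := by
          rw [← trace_add, ← mul_add, hkey, mul_add, trace_add]
  -- step 3 : re Tr(Sg*(Rρ-Rσ)) ≤ ∑ |λ|
  have hcontr : (1 - Sgᴴ * Sg).PosSemidef := by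
    rw [(mfun_isHermitian hH sgn).eq, hSgdef, mfun_mul, ← mfun_one hH, mfun_sub]
    exact mfun_posSemidef hH fun x => by have := sgn_sq_le_one x; linarith
  have hstep3 : (Sg * (Rρ - Rσ)).trace.re ≤ ∑ i, |hΔ.eigenvalues i| :=
    re_trace_mul_le hΔ hcontr
  have h2 : (absH * (A + B)).trace.re = (Sg * (Rρ - Rσ)).trace.re := by
    have := congrArg Complex.re hstep2
    simp only [Complex.add_re] at this
    linarith
  linarith [hstep1, h2 ▸ hstep1]
lemma herm_shift {A W : Matrix (Fin d) (Fin d) ℂ} (hA : A.IsHermitian) (x : Fin d → ℂ) :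
    star x ⬝ᵥ (A * W) *ᵥ x = star (A *ᵥ x) ⬝ᵥ (W *ᵥ x) := by
  rw [← mulVec_mulVec, dotProduct_mulVec]
  congr 1
  rw [star_mulVec, hA.eq]

end FvdG

open FvdG Matrix in
open ComplexOrder in
/-- Fuchs–van de Graaf: for density matrices `ρ, σ`, the trace distance
`T(ρ,σ) = (1/2) Tr|ρ-σ|` (half the sum of the absolute values of the eigenvalues of
`ρ - σ`) and the fidelity `F(ρ,σ) = (Tr √(√ρ σ √ρ))²` satisfy
`1 - √F ≤ T ≤ √(1 - F)`. -/
theorem fuchs_van_de_graaf {d : ℕ}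
    (ρ σ : Matrix (Fin d) (Fin d) ℂ)
    (hρ : ρ.PosSemidef) (hσ : σ.PosSemidef)
    (hρ1 : ρ.trace = 1) (hσ1 : σ.trace = 1)
    (hin : (hρ.sqrt * σ * hρ.sqrt).PosSemidef) :
    1 - Real.sqrt ((hin.sqrt.trace.re) ^ 2) ≤
      (1 / 2) * ∑ i, |(hρ.1.sub hσ.1).eigenvalues i| ∧
    (1 / 2) * ∑ i, |(hρ.1.sub hσ.1).eigenvalues i| ≤
      Real.sqrt (1 - (hin.sqrt.trace.re) ^ 2) := by
  classical
  have hA : hρ.sqrt.PosSemidef := hρ.posSemidef_sqrt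
  have hB : hσ.sqrt.PosSemidef := hσ.posSemidef_sqrt
  have hAA : hρ.sqrt * hρ.sqrt = ρ := hρ.sqrt_mul_self
  have hBB : hσ.sqrt * hσ.sqrt = σ := hσ.sqrt_mul_self
  have hNpsd : hin.sqrt.PosSemidef := hin.posSemidef_sqrt
  have hNN : hin.sqrt * hin.sqrt = hρ.sqrt * σ * hρ.sqrt := hin.sqrt_mul_self
  have hYN : (hσ.sqrt * hρ.sqrt)ᴴ * (hσ.sqrt * hρ.sqrt) = hin.sqrt * hin.sqrt := by
    rw [conjTranspose_mul, hA.1.eq, hB.1.eq, hNN]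
    have e : hρ.sqrt * hσ.sqrt * (hσ.sqrt * hρ.sqrt)
        = hρ.sqrt * (hσ.sqrt * hσ.sqrt) * hρ.sqrt := by noncomm_ring
    rw [e, hBB]
  obtain ⟨V, hVN, hVY, hcontr1, hcontr2⟩ := exists_partial_isometry hNpsd.1 hYN
  have hΔ : (ρ - σ).IsHermitian := hρ.1.sub hσ.1
  have hFnn : 0 ≤ hin.sqrt.trace.re := by
    rw [trace_re_eq_sum_eig hNpsd.1]
    exact Finset.sum_nonneg fun i _ => hNpsd.eigenvalues_nonneg i
  -- ===== lower bound =====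
  have hYtr : (hσ.sqrt * hρ.sqrt).trace.re ≤ hin.sqrt.trace.re := by
    rw [← hVN]
    calc (V * hin.sqrt).trace.re ≤ ∑ i, |hNpsd.1.eigenvalues i| :=
          re_trace_mul_le hNpsd.1 hcontr1
      _ = hin.sqrt.trace.re := psd_sum_abs_eig hNpsd
  have hHH : ((hρ.sqrt - hσ.sqrt) * (hρ.sqrt - hσ.sqrt)).trace.re
      = 2 - 2 * (hσ.sqrt * hρ.sqrt).trace.re := by
    have e : (hρ.sqrt - hσ.sqrt) * (hρ.sqrt - hσ.sqrt)
        = hρ.sqrt * hρ.sqrt + hσ.sqrt * hσ.sqrt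
          - (hρ.sqrt * hσ.sqrt + hσ.sqrt * hρ.sqrt) := by noncomm_ring
    rw [e, hAA, hBB, trace_sub, trace_add, trace_add, hρ1, hσ1,
      trace_mul_comm hρ.sqrt hσ.sqrt]
    simp only [Complex.sub_re, Complex.add_re, Complex.one_re]
    ring
  have hPS := powers_stormer hA hB hAA hBB hΔ
  have hlower : 1 - hin.sqrt.trace.re ≤ (1 / 2) * ∑ i, |hΔ.eigenvalues i| := by
    rw [hHH] at hPS
    linarith
  -- ===== upper bound =====
  set U := (hΔ.eigenvectorUnitary : Matrix (Fin d) (Fin d) ℂ) with hUdef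
  have hUU : Uᴴ * U = 1 := Unitary.coe_star_mul_self hΔ.eigenvectorUnitary
  have hUUc : U * Uᴴ = 1 := by
    rw [← Matrix.star_eq_conjTranspose]
    exact Matrix.mem_unitaryGroup_iff.mp hΔ.eigenvectorUnitary.2
  have hconj_tr : ∀ M : Matrix (Fin d) (Fin d) ℂ, (Uᴴ * M * U).trace = M.trace := by
    intro M
    rw [Matrix.trace_mul_cycle, hUUc, one_mul]
  set p : Fin d → ℝ := fun i => nsq (hρ.sqrt *ᵥ fun j => U j i) with hpdef
  set q : Fin d → ℝ := fun i => nsq (hσ.sqrt *ᵥ fun j => U j i) with hqdef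
  have hp_nn : ∀ i, 0 ≤ p i := fun i => nsq_nonneg _
  have hq_nn : ∀ i, 0 ≤ q i := fun i => nsq_nonneg _
  -- p in terms of matrix entries
  have hp_entry : ∀ i, p i = ((Uᴴ * ρ * U) i i).re := by
    intro i
    rw [entry_eq_dot, ← hAA, herm_shift hA.1, re_star_dot_self]
  have hq_entry : ∀ i, q i = ((Uᴴ * σ * U) i i).re := by
    intro i
    rw [entry_eq_dot, ← hBB, herm_shift hB.1, re_star_dot_self]
  -- sums
  have hp_sum : ∑ i, p i = 1 := by
    have := hconj_tr ρ
    rw [hρ1] at this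
    have := congrArg Complex.re this
    rw [Matrix.trace, Complex.re_sum] at this
    simp only [Matrix.diag_apply, Complex.one_re] at this
    rw [← this]
    exact Finset.sum_congr rfl fun i _ => hp_entry i
  have hq_sum : ∑ i, q i = 1 := by
    have := hconj_tr σ
    rw [hσ1] at this
    have := congrArg Complex.re this
    rw [Matrix.trace, Complex.re_sum] at this
    simp only [Matrix.diag_apply, Complex.one_re] at this
    rw [← this]
    exact Finset.sum_congr rfl fun i _ => hq_entry i
  -- eigenvalues
  have hpq : ∀ i, p i - q i = hΔ.eigenvalues i := by
    intro i
    have hdiag : Uᴴ * (ρ - σ) * U = diagonal (RCLike.ofReal ∘ hΔ.eigenvalues) := by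
      have hs := hΔ.spectral_theorem
      rw [Unitary.conjStarAlgAut_apply] at hs
      have hSU : (star hΔ.eigenvectorUnitary : Matrix (Fin d) (Fin d) ℂ) = Uᴴ := rfl
      rw [hSU, ← hUdef] at hs
      conv_lhs => rw [hs]
      rw [← mul_assoc, ← mul_assoc, hUU, one_mul, mul_assoc, hUU, mul_one]
    have hsplit : Uᴴ * (ρ - σ) * U = Uᴴ * ρ * U - Uᴴ * σ * U := by
      rw [mul_sub, sub_mul]
    have := congrArg (fun M : Matrix (Fin d) (Fin d) ℂ => (M i i).re) (hsplit.symm.trans hdiag)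
    simp only [Matrix.sub_apply, Complex.sub_re, diagonal_apply_eq, Function.comp_apply] at this
    rw [hp_entry, hq_entry, this]
    simp
  -- fidelity bound : F ≤ ∑ √p √q
  have hFb : hin.sqrt.trace.re ≤ ∑ i, Real.sqrt (p i) * Real.sqrt (q i) := by
    have htr1 : hin.sqrt.trace = (hρ.sqrt * (Vᴴ * hσ.sqrt)).trace := by
      rw [← hVY, trace_mul_comm, mul_assoc, trace_mul_comm, mul_assoc]
    have htr2 : (hρ.sqrt * (Vᴴ * hσ.sqrt)).trace
        = (Uᴴ * (hρ.sqrt * (Vᴴ * hσ.sqrt)) * U).trace := (hconj_tr _).symm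
    rw [htr1, htr2, Matrix.trace, Complex.re_sum]
    refine Finset.sum_le_sum fun i _ => ?_
    rw [Matrix.diag_apply]
    refine (Complex.re_le_norm _).trans ?_
    rw [entry_eq_dot, herm_shift hA.1]
    refine (cs_dot _ _).trans ?_
    rw [← mulVec_mulVec]
    refine mul_le_mul_of_nonneg_left ?_ (Real.sqrt_nonneg _)
    refine Real.sqrt_le_sqrt ?_
    refine contraction_nsq ?_ _
    rw [conjTranspose_conjTranspose]
    exact hcontr2
  -- classical Fuchs-van de Graaf, scalar part
  set b : ℝ := ∑ i, Real.sqrt (p i) * Real.sqrt (q i) with hbdef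
  have hb_nn : 0 ≤ b :=
    Finset.sum_nonneg fun i _ => mul_nonneg (Real.sqrt_nonneg _) (Real.sqrt_nonneg _)
  have habs_eq : ∑ i, |hΔ.eigenvalues i| = ∑ i, |p i - q i| :=
    Finset.sum_congr rfl fun i _ => by rw [hpq i]
  have hcs : (∑ i, |p i - q i|) ^ 2 ≤ (2 - 2 * b) * (2 + 2 * b) := by
    have hpt : ∀ i, |p i - q i|
        = |Real.sqrt (p i) - Real.sqrt (q i)| * (Real.sqrt (p i) + Real.sqrt (q i)) := by
      intro i
      rw [← abs_of_nonneg (add_nonneg (Real.sqrt_nonneg (p i)) (Real.sqrt_nonneg (q i))),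
        ← abs_mul]
      congr 1
      have hp2 := Real.sq_sqrt (hp_nn i)
      have hq2 := Real.sq_sqrt (hq_nn i)
      linear_combination hq2 - hp2
    have hCS := Finset.sum_mul_sq_le_sq_mul_sq Finset.univ
      (fun i => |Real.sqrt (p i) - Real.sqrt (q i)|)
      (fun i => Real.sqrt (p i) + Real.sqrt (q i))
    have e1 : ∑ i, (|Real.sqrt (p i) - Real.sqrt (q i)|) ^ 2 = 2 - 2 * b := by
      have : ∀ i, (|Real.sqrt (p i) - Real.sqrt (q i)|) ^ 2
          = p i + q i - 2 * (Real.sqrt (p i) * Real.sqrt (q i)) := by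
        intro i
        rw [sq_abs, sub_sq, Real.sq_sqrt (hp_nn i), Real.sq_sqrt (hq_nn i)]
        ring
      rw [Finset.sum_congr rfl fun i _ => this i]
      rw [Finset.sum_sub_distrib, Finset.sum_add_distrib, hp_sum, hq_sum, ← Finset.mul_sum,
        ← hbdef]
      ring
    have e2 : ∑ i, (Real.sqrt (p i) + Real.sqrt (q i)) ^ 2 = 2 + 2 * b := by
      have : ∀ i, (Real.sqrt (p i) + Real.sqrt (q i)) ^ 2
          = p i + q i + 2 * (Real.sqrt (p i) * Real.sqrt (q i)) := by
        intro i
        rw [add_sq, Real.sq_sqrt (hp_nn i), Real.sq_sqrt (hq_nn i)]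
        ring
      rw [Finset.sum_congr rfl fun i _ => this i]
      rw [Finset.sum_add_distrib, Finset.sum_add_distrib, hp_sum, hq_sum, ← Finset.mul_sum,
        ← hbdef]
      ring
    calc (∑ i, |p i - q i|) ^ 2
        = (∑ i, |Real.sqrt (p i) - Real.sqrt (q i)| * (Real.sqrt (p i) + Real.sqrt (q i))) ^ 2 :=
          by rw [Finset.sum_congr rfl fun i _ => hpt i]
      _ ≤ (∑ i, (|Real.sqrt (p i) - Real.sqrt (q i)|) ^ 2)
            * ∑ i, (Real.sqrt (p i) + Real.sqrt (q i)) ^ 2 := hCS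
      _ = (2 - 2 * b) * (2 + 2 * b) := by rw [e1, e2]
  constructor
  · -- lower bound
    rw [Real.sqrt_sq hFnn]
    exact hlower
  · -- upper bound
    have ht_nn : 0 ≤ (1 / 2) * ∑ i, |hΔ.eigenvalues i| := by
      have : 0 ≤ ∑ i, |hΔ.eigenvalues i| := Finset.sum_nonneg fun i _ => abs_nonneg _
      linarith
    have habs_nn : (0:ℝ) ≤ ∑ i, |p i - q i| :=
      Finset.sum_nonneg fun i _ => abs_nonneg _
    have hb1 : b ≤ 1 := by nlinarith [hcs, habs_nn]
    have hF1 : hin.sqrt.trace.re ≤ 1 := hFb.trans hb1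
    have hy_nn : (0:ℝ) ≤ 1 - hin.sqrt.trace.re ^ 2 := by nlinarith
    rw [Real.le_sqrt ht_nn hy_nn]
    have hF2 : hin.sqrt.trace.re ^ 2 ≤ b ^ 2 := pow_le_pow_left₀ hFnn hFb 2
    have ht2 : ((1 / 2) * ∑ i, |hΔ.eigenvalues i|) ^ 2 ≤ 1 - b ^ 2 := by
      rw [habs_eq]
      nlinarith [hcs]
    linarith
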